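/- Let Σ₁ and Σ₂ be real symmetric positive definite p×p matrices satisfying 2 log det((Σ₁ + Σ₂)/2) − log det Σ₁ − log det Σ₂ ≥ c₄ for some c₄ > 0, and let π₁, π₂ ≥ c₂ > 0. Then for every real symmetric positive definite p×p matrix Σ, Σ_{j=1}^{2} π_j [ tr(Σ_j Σ⁻¹) + log det Σ − log det Σ_j − p ] ≥ c₂ c₄. -/

import Mathlib

open Matrix

private lemma trace_eq_sum_eigs {p : ℕ} {A : Matrix (Fin p) (Fin p) ℝ} (hA : A.IsHermitian) :
    Matrix.trace A = ∑ i, hA.eigenvalues i := by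
  conv_lhs => rw [hA.spectral_theorem, Unitary.conjStarAlgAut_apply]
  rw [trace_mul_cycle, Matrix.mem_unitaryGroup_iff'.mp hA.eigenvectorUnitary.2, one_mul,
    trace_diagonal]
  simp

private lemma log_det_add_le_trace {p : ℕ} {M : Matrix (Fin p) (Fin p) ℝ}
    (hM : M.PosSemidef) (hdet : 0 < M.det) :
    Real.log M.det + p ≤ Matrix.trace M := by
  have hprod : M.det = ∏ i, hM.1.eigenvalues i := by
    simpa using hM.1.det_eq_prod_eigenvalues
  have hpos : ∀ i, 0 < hM.1.eigenvalues i := by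
    intro i
    rcases (hM.eigenvalues_nonneg i).lt_or_eq with h | h
    · exact h
    · exfalso
      have hz : (∏ j, hM.1.eigenvalues j) = 0 :=
        Finset.prod_eq_zero (Finset.mem_univ i) h.symm
      rw [hprod, hz] at hdet
      exact lt_irrefl 0 hdet
  rw [hprod, Real.log_prod fun i _ => (hpos i).ne', trace_eq_sum_eigs hM.1]
  have : ∑ i : Fin p, Real.log (hM.1.eigenvalues i) + p
      = ∑ i : Fin p, (Real.log (hM.1.eigenvalues i) + 1) := by
    rw [Finset.sum_add_distrib]
    simp
  rw [this]
  refine Finset.sum_le_sum fun i _ => ?_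
  have := Real.log_le_sub_one_of_pos (hpos i)
  linarith

open scoped MatrixOrder in
private lemma kl_term_nonneg {p : ℕ} {B C : Matrix (Fin p) (Fin p) ℝ}
    (hB : B.PosDef) (hC : C.PosDef) :
    0 ≤ Matrix.trace (B * C⁻¹) + Real.log C.det - Real.log B.det - p := by
  have hCi : C⁻¹.PosDef := hC.inv
  set Q := CFC.sqrt C⁻¹ with hQdef
  have hQps : Q.PosSemidef := (CFC.sqrt_nonneg C⁻¹).posSemidef
  have hQQ : Q * Q = C⁻¹ := CFC.sqrt_mul_sqrt_self C⁻¹ hCi.posSemidef.nonneg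
  have hQH : Qᴴ = Q := hQps.1
  have hMps : (Q * B * Q).PosSemidef := by
    have := hB.posSemidef.mul_mul_conjTranspose_same Q
    rwa [hQH] at this
  have hdetCi : (C⁻¹).det = C.det⁻¹ := by
    rw [det_nonsing_inv, Ring.inverse_eq_inv']
  have hdetM : (Q * B * Q).det = B.det * C.det⁻¹ := by
    rw [det_mul, det_mul]
    have : Q.det * Q.det = C.det⁻¹ := by rw [← det_mul, hQQ, hdetCi]
    calc Q.det * B.det * Q.det = B.det * (Q.det * Q.det) := by ring
      _ = B.det * C.det⁻¹ := by rw [this]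
  have hdetpos : 0 < (Q * B * Q).det := by
    rw [hdetM]
    exact mul_pos hB.det_pos (inv_pos.mpr hC.det_pos)
  have htr : Matrix.trace (Q * B * Q) = Matrix.trace (B * C⁻¹) := by
    rw [trace_mul_cycle, hQQ, trace_mul_comm]
  have hlog : Real.log (Q * B * Q).det = Real.log B.det - Real.log C.det := by
    rw [hdetM, Real.log_mul hB.det_pos.ne' (inv_ne_zero hC.det_pos.ne'), Real.log_inv]
    ring
  have := log_det_add_le_trace hMps hdetpos
  rw [htr, hlog] at this
  linarith

private lemma posDef_smul {p : ℕ} {A : Matrix (Fin p) (Fin p) ℝ} (hA : A.PosDef)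
    {c : ℝ} (hc : 0 < c) : (c • A).PosDef := by
  refine ⟨?_, fun x hx => ?_⟩
  · unfold Matrix.IsHermitian
    rw [conjTranspose_smul, hA.1]
    simp
  · have h := mul_pos hc (hA.2 hx)
    simpa [Finsupp.mul_sum, mul_assoc, mul_left_comm] using h

/-- Case 2 of the tree partition consistency theorem: if `Σ₁, Σ₂` are symmetric
positive definite with log-determinant gap
`2 log det((Σ₁+Σ₂)/2) − log det Σ₁ − log det Σ₂ ≥ c₄ > 0`, and weights
`π₁, π₂ ≥ c₂ > 0`, then for every symmetric positive definite `Σ`,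
`Σ_{j=1}^2 π_j [tr(Σ_j Σ⁻¹) + log det Σ − log det Σ_j − p] ≥ c₂ c₄`. -/
theorem common_covariance_excess_risk_lower_bound {p : ℕ}
    (S₁ S₂ : Matrix (Fin p) (Fin p) ℝ) (h₁ : S₁.PosDef) (h₂ : S₂.PosDef)
    (c₂ c₄ : ℝ) (hc₄ : 0 < c₄)
    (hgap : c₄ ≤ 2 * Real.log ((1 / 2 : ℝ) • (S₁ + S₂)).det
        - Real.log S₁.det - Real.log S₂.det)
    (π₁ π₂ : ℝ) (hc₂ : 0 < c₂) (hπ₁ : c₂ ≤ π₁) (hπ₂ : c₂ ≤ π₂)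
    (S : Matrix (Fin p) (Fin p) ℝ) (hS : S.PosDef) :
    c₂ * c₄ ≤
      π₁ * (Matrix.trace (S₁ * S⁻¹) + Real.log S.det - Real.log S₁.det - p) +
        π₂ * (Matrix.trace (S₂ * S⁻¹) + Real.log S.det - Real.log S₂.det - p) := by
  set A : Matrix (Fin p) (Fin p) ℝ := (1 / 2 : ℝ) • (S₁ + S₂) with hAdef
  have hA : A.PosDef := posDef_smul (h₁.add h₂) (by norm_num)
  set T₁ : ℝ := Matrix.trace (S₁ * S⁻¹) + Real.log S.det - Real.log S₁.det - p with hT₁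
  set T₂ : ℝ := Matrix.trace (S₂ * S⁻¹) + Real.log S.det - Real.log S₂.det - p with hT₂
  have h1 : 0 ≤ T₁ := kl_term_nonneg h₁ hS
  have h2 : 0 ≤ T₂ := kl_term_nonneg h₂ hS
  have htrA : Matrix.trace (A * S⁻¹)
      = (1 / 2 : ℝ) * (Matrix.trace (S₁ * S⁻¹) + Matrix.trace (S₂ * S⁻¹)) := by
    rw [hAdef, smul_mul, trace_smul, add_mul, trace_add]
    simp [smul_eq_mul]
  have hTA : 0 ≤ Matrix.trace (A * S⁻¹) + Real.log S.det - Real.log A.det - p :=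
    kl_term_nonneg hA hS
  have hsum : c₄ ≤ T₁ + T₂ := by
    rw [htrA] at hTA
    rw [hT₁, hT₂]
    linarith
  nlinarith [mul_le_mul_of_nonneg_right hπ₁ h1, mul_le_mul_of_nonneg_right hπ₂ h2,
    mul_le_mul_of_nonneg_left hsum hc₂.le]
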